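/- Lemma (propagation of compact support). Under the bootstrap assumptions of Proposition 4.1 and the modulation-variable bounds |κ̇|≤M, |ξ̇|≤M^{1/2}, |T*|≤3Mε², if the initial electron density n_{e,0} is supported in the set X={|x₁|≤ε^{1/2}, |x̌|≤ε^{1/6}}, then for every s ≥ −log ε the self-similar sound speed S(·,s) (equivalently, the electron density) is supported in the set X(s)={|y₁|≤2ε^{1/2}e^{3s/2}, |y̌|≤2ε^{1/6}e^{s/2}}. The proof uses that along the Lagrangian flow φ(x₀,t) of the velocity (2/(1+α))(ũ−ξ̇), the sound speed satisfies σ̃(φ(x₀,t),t)=σ̃(x₀,0)·exp(−(2α/(1+α))∫_{−ε}^{t}(∇·ũ)∘φ(x₀,δ)dδ), so vanishing of σ̃ propagates along trajectories, and the trajectories move by at most ‖ũ−ξ̇‖_{L∞}·T* < ε^{1/2}. -/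

import Mathlib

/-!
Lemma (propagation of compact support).  In the translated variables
`x = X - ξ(t)`, `t = (1+α)T/2`, the sound speed `σ̃` satisfies
`(1+α)/2 ∂ₜσ̃ + ((ũ-ξ̇)·∇)σ̃ + ασ̃ ∇·ũ = 0`.  If the initial electron density
(equivalently `σ̃(·,-ε)`) is supported in `X = {|x₁| ≤ ε^{1/2}, |x̌| ≤ ε^{1/6}}`,
and the bootstrap/modulation bounds hold (`|ũ| ≤ M^{1/2}`, `|ξ̇| ≤ M^{1/2}`,
`|T*| ≤ 3Mε²`), then for every `t ∈ [-ε,T*)` — equivalently every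
`s ≥ -log ε` — the sound speed is supported in the set which in self-similar
variables reads `X(s) = {|y₁| ≤ 2ε^{1/2}e^{3s/2}, |y̌| ≤ 2ε^{1/6}e^{s/2}}`,
i.e. in `x`-variables `{|x₁| ≤ 2ε^{1/2}, |x̌| ≤ 2ε^{1/6}}`.
-/

/-- Partial derivative in the coordinate direction `i`. -/
noncomputable def pd (i : Fin 3) (f : (Fin 3 → ℝ) → ℝ) : (Fin 3 → ℝ) → ℝ :=
  fun y => fderiv ℝ f y (Pi.single i 1)

open Set Metric

/-- Triangle-type inequality for the planar distance from the origin. -/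
lemma sqrt_sq_add_sq_le (a b c d D : ℝ) (hD : 0 ≤ D)
    (h1 : |a - c| ≤ D) (h2 : |b - d| ≤ D) :
    Real.sqrt (a^2 + b^2) ≤ Real.sqrt (c^2 + d^2) + 2 * D := by
  have hs2 : 0 ≤ Real.sqrt (c^2 + d^2) := Real.sqrt_nonneg _
  have hc : |c| ≤ Real.sqrt (c^2 + d^2) := by
    rw [← Real.sqrt_sq_eq_abs]
    exact Real.sqrt_le_sqrt (by nlinarith [sq_nonneg d])
  have hd : |d| ≤ Real.sqrt (c^2 + d^2) := by
    rw [← Real.sqrt_sq_eq_abs]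
    exact Real.sqrt_le_sqrt (by nlinarith [sq_nonneg c])
  have hsq : (Real.sqrt (c^2 + d^2))^2 = c^2 + d^2 := Real.sq_sqrt (by positivity)
  have ha' : |a| ≤ |c| + D := by
    have := abs_sub_abs_le_abs_sub a c; linarith
  have hb' : |b| ≤ |d| + D := by
    have := abs_sub_abs_le_abs_sub b d; linarith
  have key : a^2 + b^2 ≤ (Real.sqrt (c^2 + d^2) + 2 * D)^2 := by
    nlinarith [sq_abs a, sq_abs b, sq_abs c, sq_abs d, abs_nonneg a, abs_nonneg b,
      abs_nonneg c, abs_nonneg d]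
  calc Real.sqrt (a^2 + b^2) ≤ Real.sqrt ((Real.sqrt (c^2 + d^2) + 2 * D)^2) :=
        Real.sqrt_le_sqrt key
    _ = Real.sqrt (c^2 + d^2) + 2 * D := Real.sqrt_sq (by positivity)

set_option maxHeartbeats 2000000 in
theorem propagation_of_compact_support
    (α κ0 : ℝ) (hα : 0 < α) (hκ0 : 1 < κ0) :
    ∀ M : ℝ, 1 ≤ M → ∃ ε0 : ℝ, 0 < ε0 ∧ ∀ ε : ℝ, 0 < ε → ε < ε0 →
    ∀ (u : (Fin 3 → ℝ) → ℝ → Fin 3 → ℝ) (σ : (Fin 3 → ℝ) → ℝ → ℝ)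
      (ξ' : ℝ → Fin 3 → ℝ) (Tstar : ℝ),
      -- blowup time bound (modulation)
      |Tstar| ≤ 3 * M * ε^2 → -ε < Tstar →
      -- regularity
      ContDiff ℝ 1 (fun p : (Fin 3 → ℝ) × ℝ => σ p.1 p.2) →
      (∀ i : Fin 3, ContDiff ℝ 1 (fun p : (Fin 3 → ℝ) × ℝ => u p.1 p.2 i)) →
      Continuous (fun t => ξ' t) →
      -- bootstrap/modulation bounds on the velocity and on ξ̇
      (∀ (x : Fin 3 → ℝ) (t : ℝ), t ∈ Set.Ico (-ε) Tstar → ∀ i : Fin 3,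
        |u x t i| ≤ M ^ (1/2 : ℝ) ∧ |ξ' t i| ≤ M ^ (1/2 : ℝ)) →
      -- the transport equation for the sound speed
      (∀ (x : Fin 3 → ℝ) (t : ℝ), t ∈ Set.Ico (-ε) Tstar →
        ((1+α)/2) * deriv (fun t' => σ x t') t
          + (∑ i, (u x t i - ξ' t i) * pd i (fun x' => σ x' t) x)
          + α * σ x t * (∑ i, pd i (fun x' => u x' t i) x) = 0) →
      -- initial support condition
      (∀ x : Fin 3 → ℝ, σ x (-ε) ≠ 0 →
        |x 0| ≤ ε ^ (1/2 : ℝ) ∧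
        Real.sqrt ((x 1)^2 + (x 2)^2) ≤ ε ^ (1/6 : ℝ)) →
      -- conclusion: the support stays inside X(s) for all later times
      ∀ t : ℝ, t ∈ Set.Ico (-ε) Tstar → ∀ x : Fin 3 → ℝ, σ x t ≠ 0 →
        |x 0| ≤ 2 * ε ^ (1/2 : ℝ) ∧
        Real.sqrt ((x 1)^2 + (x 2)^2) ≤ 2 * ε ^ (1/6 : ℝ) := by
  intro M hM
  have hM0 : (0:ℝ) < M := lt_of_lt_of_le one_pos hM
  refine ⟨1 / (40000 * M^2), by positivity, ?_⟩
  intro ε hε hεsmall u σ ξ' Tstar hT hTpos hσC1 huC1 hξc hbound htransport hinit t ht x hσx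
  -- basic numerics
  have hε1 : ε ≤ 1 := by
    have h1 : (1:ℝ) ≤ 40000 * M^2 := by nlinarith
    have : 1 / (40000 * M^2) ≤ 1 := by
      rw [div_le_one (by positivity)]; exact h1
    linarith
  have hMsq : M ^ (1/2 : ℝ) ≤ M := by
    calc M ^ (1/2 : ℝ) ≤ M ^ (1:ℝ) :=
          Real.rpow_le_rpow_of_exponent_le hM (by norm_num)
      _ = M := Real.rpow_one M
  have hMsq0 : (0:ℝ) ≤ M ^ (1/2 : ℝ) := Real.rpow_nonneg hM0.le _
  have hεhalf : ε ^ (1/2 : ℝ) ≤ 1 / (200 * M) := by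
    have h1 : ε ≤ (1 / (200 * M))^2 := by
      have h2 : (1 / (200 * M))^2 = 1 / (40000 * M^2) := by
        field_simp; ring
      linarith [hεsmall, h2]
    calc ε ^ (1/2 : ℝ) ≤ ((1 / (200 * M))^2) ^ (1/2 : ℝ) :=
          Real.rpow_le_rpow hε.le h1 (by norm_num)
      _ = 1 / (200 * M) := by
          rw [← Real.rpow_natCast (1 / (200 * M)) 2,
            ← Real.rpow_mul (by positivity : (0:ℝ) ≤ 1 / (200 * M))]
          norm_num
  have hε12pos : (0:ℝ) ≤ ε ^ (1/2 : ℝ) := Real.rpow_nonneg hε.le _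
  have hε16pos : (0:ℝ) ≤ ε ^ (1/6 : ℝ) := Real.rpow_nonneg hε.le _
  have hT2 : Tstar ≤ ε := by
    have h3 : 3 * M * ε ≤ 1 := by
      have h4 : ε * (40000 * M^2) ≤ 1 := by
        rw [← le_div_iff₀ (by positivity)]; exact hεsmall.le
      have h6 : 3 * M ≤ 40000 * M^2 := by nlinarith
      calc 3 * M * ε ≤ 40000 * M^2 * ε := mul_le_mul_of_nonneg_right h6 hε.le
        _ = ε * (40000 * M^2) := by ring
        _ ≤ 1 := h4
    have : 3 * M * ε^2 ≤ ε := by nlinarith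
    calc Tstar ≤ |Tstar| := le_abs_self _
      _ ≤ 3 * M * ε^2 := hT
      _ ≤ ε := this
  have htle : t < Tstar := ht.2
  have htge : -ε ≤ t := ht.1
  have hIccsub : Icc (-ε) t ⊆ Ico (-ε) Tstar := fun δ hδ => ⟨hδ.1, lt_of_le_of_lt hδ.2 htle⟩
  have h1α : (0:ℝ) < 1 + α := by linarith
  have h2α : 2 / (1 + α) ≤ 2 := by
    rw [div_le_iff₀ h1α]; nlinarith
  have h2α0 : (0:ℝ) < 2 / (1 + α) := by positivity
  -- the velocity field of the characteristics
  set V : ℝ → (Fin 3 → ℝ) → (Fin 3 → ℝ) :=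
    fun δ y => fun i => (2 / (1 + α)) * (u y δ i - ξ' δ i) with hV
  set R : ℝ := 4 * M * (t + ε) + 1 with hR
  have htε0 : (0:ℝ) ≤ t + ε := by linarith
  have hR0 : (0:ℝ) ≤ R := by positivity
  -- global bound on the velocity field
  have hVb : ∀ δ ∈ Icc (-ε) t, ∀ y, ‖V δ y‖ ≤ 4 * M := by
    intro δ hδ y
    rw [pi_norm_le_iff_of_nonneg (by positivity)]
    intro i
    obtain ⟨hu1, hu2⟩ := hbound y δ (hIccsub hδ) i
    have habs : ‖V δ y i‖ = (2 / (1 + α)) * |u y δ i - ξ' δ i| := by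
      rw [hV]; simp only [Real.norm_eq_abs, abs_mul, abs_of_pos h2α0]
    rw [habs]
    have h5 : |u y δ i - ξ' δ i| ≤ 2 * M ^ (1/2 : ℝ) := by
      calc |u y δ i - ξ' δ i| ≤ |u y δ i| + |ξ' δ i| := abs_sub _ _
        _ ≤ 2 * M ^ (1/2 : ℝ) := by linarith
    calc (2 / (1 + α)) * |u y δ i - ξ' δ i| ≤ 2 * (2 * M ^ (1/2 : ℝ)) := by
          apply mul_le_mul h2α h5 (abs_nonneg _) (by norm_num)
      _ ≤ 4 * M := by nlinarith
  -- the component functions of u as functions on the product space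
  set G : Fin 3 → ((Fin 3 → ℝ) × ℝ) → ℝ := fun i p => u p.1 p.2 i with hG
  set Sg : ((Fin 3 → ℝ) × ℝ) → ℝ := fun p => σ p.1 p.2 with hSg
  -- compactness bound on the derivatives of u
  set KK : Set ((Fin 3 → ℝ) × ℝ) := closedBall x R ×ˢ Icc (-ε) t with hKK
  have hKKcpt : IsCompact KK := (isCompact_closedBall x R).prod isCompact_Icc
  have hBex : ∀ i : Fin 3, ∃ B, ∀ p ∈ KK, ‖fderiv ℝ (G i) p‖ ≤ B := fun i =>
    hKKcpt.exists_bound_of_continuousOn (((huC1 i).continuous_fderiv one_ne_zero).continuousOn)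
  choose Bf hBf using hBex
  set B : ℝ := ∑ j : Fin 3, |Bf j| with hBdef
  have hB0 : (0:ℝ) ≤ B := Finset.sum_nonneg fun j _ => abs_nonneg _
  have hBB : ∀ i, ∀ p ∈ KK, ‖fderiv ℝ (G i) p‖ ≤ B := by
    intro i p hp
    refine le_trans (hBf i p hp) (le_trans (le_abs_self _) ?_)
    exact Finset.single_le_sum (fun j _ => abs_nonneg (Bf j)) (Finset.mem_univ i)
  -- derivative of the x-slices of u
  have hinl : ‖ContinuousLinearMap.inl ℝ (Fin 3 → ℝ) ℝ‖ ≤ 1 := by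
    refine ContinuousLinearMap.opNorm_le_bound _ zero_le_one (fun z => ?_)
    rw [ContinuousLinearMap.inl_apply, one_mul, Prod.norm_def]
    exact max_le le_rfl (by simp)
  have hcompu : ∀ (i : Fin 3) (δ : ℝ) (y : Fin 3 → ℝ),
      HasFDerivAt (fun y' => u y' δ i)
        ((fderiv ℝ (G i) (y, δ)).comp (ContinuousLinearMap.inl ℝ (Fin 3 → ℝ) ℝ)) y := by
    intro i δ y
    exact (((huC1 i).differentiable one_ne_zero) (y, δ)).hasFDerivAt.comp y
      (hasFDerivAt_prodMk_left (𝕜 := ℝ) y δ)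
  have hDn : ∀ (i : Fin 3) (δ : ℝ) (y : Fin 3 → ℝ), (y, δ) ∈ KK →
      ‖(fderiv ℝ (G i) (y, δ)).comp (ContinuousLinearMap.inl ℝ (Fin 3 → ℝ) ℝ)‖ ≤ B := by
    intro i δ y hp
    calc ‖(fderiv ℝ (G i) (y, δ)).comp (ContinuousLinearMap.inl ℝ (Fin 3 → ℝ) ℝ)‖
        ≤ ‖fderiv ℝ (G i) (y, δ)‖ * ‖ContinuousLinearMap.inl ℝ (Fin 3 → ℝ) ℝ‖ :=
          ContinuousLinearMap.opNorm_comp_le _ _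
      _ ≤ B * 1 := mul_le_mul (hBB i _ hp) hinl (norm_nonneg _) hB0
      _ = B := mul_one B
  -- Lipschitz bound for V on the closed ball
  have hLip : ∀ δ ∈ Icc (-ε) t,
      LipschitzOnWith (Real.toNNReal (2 * B)) (V δ) (closedBall x R) := by
    intro δ hδ
    rw [lipschitzOnWith_iff_dist_le_mul]
    intro y hy z hz
    rw [dist_eq_norm, dist_eq_norm, Real.coe_toNNReal _ (by positivity)]
    rw [pi_norm_le_iff_of_nonneg (by positivity)]
    intro i
    have hcomp : ∀ y' ∈ closedBall x R,
        HasFDerivWithinAt (fun y'' => V δ y'' i)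
          ((2 / (1 + α)) • ((fderiv ℝ (G i) (y', δ)).comp
            (ContinuousLinearMap.inl ℝ (Fin 3 → ℝ) ℝ))) (closedBall x R) y' := by
      intro y' _
      exact (((hcompu i δ y').sub_const (ξ' δ i)).const_mul (2 / (1 + α))).hasFDerivWithinAt
    have hbnd : ∀ y' ∈ closedBall x R,
        ‖(2 / (1 + α)) • ((fderiv ℝ (G i) (y', δ)).comp
          (ContinuousLinearMap.inl ℝ (Fin 3 → ℝ) ℝ))‖ ≤ 2 * B := by
      intro y' hy'
      refine le_trans (ContinuousLinearMap.opNorm_smul_le _ _) ?_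
      rw [Real.norm_eq_abs, abs_of_pos h2α0]
      exact mul_le_mul h2α (hDn i δ y' (Set.mk_mem_prod hy' hδ)) (norm_nonneg _) (by norm_num)
    have hmv := Convex.norm_image_sub_le_of_norm_hasFDerivWithin_le
      (f := fun y'' => V δ y'' i)
      (f' := fun y' => (2 / (1 + α)) • ((fderiv ℝ (G i) (y', δ)).comp
        (ContinuousLinearMap.inl ℝ (Fin 3 → ℝ) ℝ)))
      hcomp hbnd (convex_closedBall x R) hz hy
    calc ‖(V δ y - V δ z) i‖ = ‖V δ y i - V δ z i‖ := by rw [Pi.sub_apply]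
      _ ≤ 2 * B * ‖y - z‖ := hmv
  -- Picard–Lindelöf: solve the characteristic ODE backwards from (x, t)
  have hPL : IsPicardLindelof V (⟨t, ⟨htge, le_refl t⟩⟩ : Icc (-ε) t) x (Real.toNNReal R) 0
      (Real.toNNReal (4 * M)) (Real.toNNReal (2 * B)) := by
    refine ⟨fun δ hδ => by rw [Real.coe_toNNReal R hR0]; exact hLip δ hδ, ?_,
      fun δ hδ y _ => by rw [Real.coe_toNNReal _ (by positivity)]; exact hVb δ hδ y, ?_⟩
    · intro y _
      apply Continuous.continuousOn
      refine continuous_pi (fun i => ?_)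
      exact continuous_const.mul
        ((((huC1 i).continuous).comp (continuous_const.prodMk continuous_id)).sub
          ((continuous_apply i).comp hξc))
    · simp only [Real.coe_toNNReal R hR0, Real.coe_toNNReal _ (by positivity : (0:ℝ) ≤ 4 * M),
        NNReal.coe_zero, sub_zero]
      rw [sub_self, sub_neg_eq_add, max_eq_right htε0, hR]
      linarith
  obtain ⟨f, hft, hf'⟩ := hPL.exists_eq_forall_mem_Icc_hasDerivWithinAt₀
  replace hft : f t = x := hft
  have htmem : t ∈ Icc (-ε) t := ⟨htge, le_refl t⟩
  have hεmem : -ε ∈ Icc (-ε) t := ⟨le_refl _, htge⟩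
  have hfc : ContinuousOn f (Icc (-ε) t) := fun δ hδ => (hf' δ hδ).continuousWithinAt
  -- displacement bound
  have hfd : ∀ δ ∈ Icc (-ε) t, ‖f δ - x‖ ≤ 4 * M * (t + ε) := by
    intro δ hδ
    have h6 := Convex.norm_image_sub_le_of_norm_hasDerivWithin_le hf'
      (fun δ' hδ' => hVb δ' hδ' (f δ')) (convex_Icc _ _) htmem hδ
    rw [hft] at h6
    calc ‖f δ - x‖ ≤ 4 * M * ‖δ - t‖ := h6
      _ ≤ 4 * M * (t + ε) := by
          apply mul_le_mul_of_nonneg_left _ (by positivity)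
          rw [Real.norm_eq_abs]
          rw [abs_le]
          constructor <;> [linarith [hδ.1]; linarith [hδ.2]]
  have hfball : ∀ δ ∈ Icc (-ε) t, f δ ∈ closedBall x R := by
    intro δ hδ
    rw [mem_closedBall, dist_eq_norm]
    exact le_trans (hfd δ hδ) (by rw [hR]; linarith)
  -- identification of pd with the joint derivative
  have hSdiff : Differentiable ℝ Sg := hσC1.differentiable one_ne_zero
  have hpdσ : ∀ (δ : ℝ) (y : Fin 3 → ℝ) (i : Fin 3),
      pd i (fun x' => σ x' δ) y = fderiv ℝ Sg (y, δ) (Pi.single i 1, 0) := by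
    intro δ y i
    have h1 : HasFDerivAt (fun y' => σ y' δ)
        ((fderiv ℝ Sg (y, δ)).comp (ContinuousLinearMap.inl ℝ (Fin 3 → ℝ) ℝ)) y :=
      by have h := (hSdiff (y, δ)).hasFDerivAt.comp y (hasFDerivAt_prodMk_left (𝕜 := ℝ) y δ); exact h
    show fderiv ℝ (fun x' => σ x' δ) y (Pi.single i 1) = _
    rw [h1.fderiv]
    simp [ContinuousLinearMap.comp_apply, ContinuousLinearMap.inl_apply]
  have hpdu : ∀ (δ : ℝ) (y : Fin 3 → ℝ) (i : Fin 3),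
      pd i (fun x' => u x' δ i) y = fderiv ℝ (G i) (y, δ) (Pi.single i 1, 0) := by
    intro δ y i
    show fderiv ℝ (fun x' => u x' δ i) y (Pi.single i 1) = _
    rw [(hcompu i δ y).fderiv]
    simp [ContinuousLinearMap.comp_apply, ContinuousLinearMap.inl_apply]
  have hdtσ : ∀ (δ : ℝ) (y : Fin 3 → ℝ),
      deriv (fun t' => σ y t') δ = fderiv ℝ Sg (y, δ) (0, 1) := by
    intro δ y
    have hc : HasDerivAt (fun t' : ℝ => ((y, t') : (Fin 3 → ℝ) × ℝ))
        (((0 : Fin 3 → ℝ), (1:ℝ))) δ := (hasDerivAt_const δ y).prodMk (hasDerivAt_id δ)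
    exact ((hSdiff (y, δ)).hasFDerivAt.comp_hasDerivAt δ hc).deriv
  -- linear decomposition of the joint derivative
  have hdecomp : ∀ (p : (Fin 3 → ℝ) × ℝ) (w : Fin 3 → ℝ),
      fderiv ℝ Sg p (w, 1) =
        (∑ i, w i * fderiv ℝ Sg p (Pi.single i 1, 0)) + fderiv ℝ Sg p (0, 1) := by
    intro p w
    have hsplitv : ((w, (1:ℝ)) : (Fin 3 → ℝ) × ℝ) =
        ((w, (0:ℝ)) : (Fin 3 → ℝ) × ℝ) + ((0 : Fin 3 → ℝ), (1:ℝ)) := by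
      rw [Prod.mk_add_mk, add_zero, zero_add]
    rw [hsplitv, map_add]
    congr 1
    have hw : w = ∑ i : Fin 3, w i • (Pi.single i (1:ℝ) : Fin 3 → ℝ) := by
      funext j
      simp [Finset.sum_apply, Pi.single_apply, mul_ite]
    have hinlw : ((w, (0:ℝ)) : (Fin 3 → ℝ) × ℝ) =
        ContinuousLinearMap.inl ℝ (Fin 3 → ℝ) ℝ w := by
      rw [ContinuousLinearMap.inl_apply]
    rw [hinlw, ← ContinuousLinearMap.comp_apply]
    conv_lhs => rw [hw]
    rw [map_sum]
    refine Finset.sum_congr rfl fun i _ => ?_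
    rw [map_smul, smul_eq_mul, ContinuousLinearMap.comp_apply,
      ContinuousLinearMap.inl_apply]
  -- the sound speed along the characteristic satisfies a linear ODE
  set g : ℝ → ℝ := fun δ => σ (f δ) δ with hgdef
  set c : ℝ → ℝ :=
    fun δ => -(2 * α / (1 + α)) * ∑ i, fderiv ℝ (G i) (f δ, δ) (Pi.single i 1, 0) with hcdef
  have hg' : ∀ δ ∈ Icc (-ε) t, HasDerivWithinAt g (c δ * g δ) (Icc (-ε) t) δ := by
    intro δ hδ
    have hp : HasDerivWithinAt (fun δ' => ((f δ', δ') : (Fin 3 → ℝ) × ℝ))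
        ((V δ (f δ), 1)) (Icc (-ε) t) δ :=
      (hf' δ hδ).prodMk (hasDerivWithinAt_id δ _)
    have h2 : HasDerivWithinAt g (fderiv ℝ Sg (f δ, δ) (V δ (f δ), 1)) (Icc (-ε) t) δ := by
      have h2' := HasFDerivAt.comp_hasDerivWithinAt_of_eq
        (l := Sg) (f := fun δ' => ((f δ', δ') : (Fin 3 → ℝ) × ℝ)) δ
        (hSdiff (f δ, δ)).hasFDerivAt hp rfl
      exact h2'
    have h3 : c δ * g δ = fderiv ℝ Sg (f δ, δ) (V δ (f δ), 1) := by
      rw [hdecomp]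
      have htr := htransport (f δ) δ (hIccsub hδ)
      rw [hdtσ δ (f δ)] at htr
      have e1 : ∑ i : Fin 3, (u (f δ) δ i - ξ' δ i) * pd i (fun x' => σ x' δ) (f δ)
          = ∑ i : Fin 3, (u (f δ) δ i - ξ' δ i) * fderiv ℝ Sg (f δ, δ) (Pi.single i 1, 0) :=
        Finset.sum_congr rfl fun i _ => by rw [hpdσ δ (f δ) i]
      have e2 : ∑ i : Fin 3, pd i (fun x' => u x' δ i) (f δ)
          = ∑ i : Fin 3, fderiv ℝ (G i) (f δ, δ) (Pi.single i 1, 0) :=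
        Finset.sum_congr rfl fun i _ => by rw [hpdu δ (f δ) i]
      rw [e1, e2] at htr
      have htr2 : ((1+α)/2) * fderiv ℝ Sg (f δ, δ) (0, 1)
          + (∑ i, (u (f δ) δ i - ξ' δ i) * fderiv ℝ Sg (f δ, δ) (Pi.single i 1, 0))
          + α * σ (f δ) δ * (∑ i, fderiv ℝ (G i) (f δ, δ) (Pi.single i 1, 0)) = 0 := htr
      have hsum : ∑ i, V δ (f δ) i * fderiv ℝ Sg (f δ, δ) (Pi.single i 1, 0)
          = (2/(1+α)) * ∑ i, (u (f δ) δ i - ξ' δ i) * fderiv ℝ Sg (f δ, δ) (Pi.single i 1, 0) := by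
        rw [Finset.mul_sum]
        exact Finset.sum_congr rfl fun i _ => by rw [hV]; ring
      rw [hsum, hcdef, hgdef]
      have h1αne : (1 + α) ≠ 0 := ne_of_gt h1α
      field_simp
      nlinarith [htr2]
    rw [h3]
    exact h2
  -- bound on the coefficient c
  have hc_bound : ∀ δ ∈ Icc (-ε) t, |c δ| ≤ 6 * B := by
    intro δ hδ
    have hterm : ∀ i : Fin 3, |fderiv ℝ (G i) (f δ, δ) (Pi.single i 1, 0)| ≤ B := by
      intro i
      have h7 : (f δ, δ) ∈ KK := Set.mk_mem_prod (hfball δ hδ) hδ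
      calc |fderiv ℝ (G i) (f δ, δ) (Pi.single i 1, 0)|
          ≤ ‖fderiv ℝ (G i) (f δ, δ)‖ * ‖((Pi.single i 1 : Fin 3 → ℝ), (0:ℝ))‖ :=
            (fderiv ℝ (G i) (f δ, δ)).le_opNorm _
        _ ≤ B * 1 := by
            apply mul_le_mul (hBB i _ h7) _ (norm_nonneg _) hB0
            rw [Prod.norm_def]
            apply max_le
            · rw [Pi.norm_single]; simp
            · simp
        _ = B := mul_one B
    have hαcoef : 2 * α / (1 + α) ≤ 2 := by
      rw [div_le_iff₀ h1α]; nlinarith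
    have hαcoef0 : (0:ℝ) ≤ 2 * α / (1 + α) := by positivity
    rw [hcdef]
    rw [abs_mul, abs_neg, abs_of_nonneg hαcoef0]
    have hsum3 : |∑ i : Fin 3, fderiv ℝ (G i) (f δ, δ) (Pi.single i 1, 0)| ≤ 3 * B := by
      calc |∑ i : Fin 3, fderiv ℝ (G i) (f δ, δ) (Pi.single i 1, 0)|
          ≤ ∑ i : Fin 3, |fderiv ℝ (G i) (f δ, δ) (Pi.single i 1, 0)| :=
            Finset.abs_sum_le_sum_abs _ _
        _ ≤ ∑ _i : Fin 3, B := Finset.sum_le_sum fun i _ => hterm i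
        _ = 3 * B := by
            rw [Finset.sum_const, Finset.card_univ, Fintype.card_fin, nsmul_eq_mul]
            norm_num
    calc 2 * α / (1 + α) * |∑ i : Fin 3, fderiv ℝ (G i) (f δ, δ) (Pi.single i 1, 0)|
        ≤ 2 * (3 * B) := mul_le_mul hαcoef hsum3 (abs_nonneg _) (by norm_num)
      _ = 6 * B := by ring
  -- Grönwall: vanishing at the initial time would propagate
  have hkey : σ (f (-ε)) (-ε) ≠ 0 := by
    intro h0
    have hgc : ContinuousOn g (Icc (-ε) t) := fun δ hδ => (hg' δ hδ).continuousWithinAt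
    have hg'r : ∀ δ ∈ Ico (-ε) t, HasDerivWithinAt g (c δ * g δ) (Ici δ) δ := by
      intro δ hδ
      exact (hg' δ (Ico_subset_Icc_self hδ)).mono_of_mem_nhdsWithin
        (Icc_mem_nhdsGE_of_mem hδ)
    have hbd : ∀ δ ∈ Ico (-ε) t, ‖c δ * g δ‖ ≤ 6 * B * ‖g δ‖ + 0 := by
      intro δ hδ
      rw [add_zero, Real.norm_eq_abs, Real.norm_eq_abs, abs_mul]
      exact mul_le_mul_of_nonneg_right (hc_bound δ (Ico_subset_Icc_self hδ)) (abs_nonneg _)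
    have ha0 : ‖g (-ε)‖ ≤ 0 :=
      le_of_eq (by rw [show g (-ε) = 0 from h0, norm_zero])
    have h8 := norm_le_gronwallBound_of_norm_deriv_right_le (δ := 0) (ε := 0) (K := 6 * B)
      hgc hg'r ha0 hbd t htmem
    rw [gronwallBound_ε0_δ0] at h8
    have h9 : g t = 0 := norm_eq_zero.mp (le_antisymm h8 (norm_nonneg _))
    have h10 : σ x t = 0 := by rw [← hft]; exact h9
    exact hσx h10
  -- initial support bound
  obtain ⟨hinit1, hinit2⟩ := hinit (f (-ε)) hkey
  -- displacement from the initial point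
  have hdisp : ∀ i : Fin 3, |x i - f (-ε) i| ≤ 8 * M * ε := by
    intro i
    have h10 := hfd (-ε) hεmem
    have h11 : ‖f (-ε) - x‖ ≤ 8 * M * ε := by
      calc ‖f (-ε) - x‖ ≤ 4 * M * (t + ε) := h10
        _ ≤ 4 * M * (2 * ε) := by
            apply mul_le_mul_of_nonneg_left _ (by positivity)
            linarith [lt_of_lt_of_le htle hT2]
        _ = 8 * M * ε := by ring
    calc |x i - f (-ε) i| = ‖(f (-ε) - x) i‖ := by
          rw [Pi.sub_apply, Real.norm_eq_abs, abs_sub_comm]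
      _ ≤ ‖f (-ε) - x‖ := norm_le_pi_norm _ i
      _ ≤ 8 * M * ε := h11
  -- final numerics
  have h8M : 8 * M * ε ≤ ε ^ (1/2 : ℝ) := by
    have hsplit : ε ^ (1/2 : ℝ) * ε ^ (1/2 : ℝ) = ε := by
      rw [← Real.rpow_add hε]; norm_num
    calc 8 * M * ε = 8 * M * (ε ^ (1/2 : ℝ) * ε ^ (1/2 : ℝ)) := by rw [hsplit]
      _ = (8 * M * ε ^ (1/2 : ℝ)) * ε ^ (1/2 : ℝ) := by ring
      _ ≤ (8 * M * (1 / (200 * M))) * ε ^ (1/2 : ℝ) := by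
          apply mul_le_mul_of_nonneg_right _ hε12pos
          exact mul_le_mul_of_nonneg_left hεhalf (by positivity)
      _ ≤ ε ^ (1/2 : ℝ) := by
          have : 8 * M * (1 / (200 * M)) = 1/25 := by field_simp; ring
          rw [this]; linarith
  have h16M : 16 * M * ε ≤ ε ^ (1/6 : ℝ) := by
    have hsplit : ε ^ (5/6 : ℝ) * ε ^ (1/6 : ℝ) = ε := by
      rw [← Real.rpow_add hε]; norm_num
    have h56 : ε ^ (5/6 : ℝ) ≤ ε ^ (1/2 : ℝ) :=
      Real.rpow_le_rpow_of_exponent_ge hε hε1 (by norm_num)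
    calc 16 * M * ε = 16 * M * (ε ^ (5/6 : ℝ) * ε ^ (1/6 : ℝ)) := by rw [hsplit]
      _ = (16 * M * ε ^ (5/6 : ℝ)) * ε ^ (1/6 : ℝ) := by ring
      _ ≤ (16 * M * (1 / (200 * M))) * ε ^ (1/6 : ℝ) := by
          apply mul_le_mul_of_nonneg_right _ hε16pos
          exact mul_le_mul_of_nonneg_left (le_trans h56 hεhalf) (by positivity)
      _ ≤ ε ^ (1/6 : ℝ) := by
          have : 16 * M * (1 / (200 * M)) = 2/25 := by field_simp; ring
          rw [this]; linarith
  constructor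
  · -- first coordinate
    have := hdisp 0
    calc |x 0| = |f (-ε) 0 + (x 0 - f (-ε) 0)| := by congr 1; ring
      _ ≤ |f (-ε) 0| + |x 0 - f (-ε) 0| := abs_add_le _ _
      _ ≤ ε ^ (1/2 : ℝ) + 8 * M * ε := by linarith
      _ ≤ 2 * ε ^ (1/2 : ℝ) := by linarith
  · -- transverse coordinates
    have h12 := sqrt_sq_add_sq_le (x 1) (x 2) (f (-ε) 1) (f (-ε) 2) (8 * M * ε)
      (by positivity) (hdisp 1) (hdisp 2)
    calc Real.sqrt ((x 1)^2 + (x 2)^2)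
        ≤ Real.sqrt ((f (-ε) 1)^2 + (f (-ε) 2)^2) + 2 * (8 * M * ε) := h12
      _ ≤ ε ^ (1/6 : ℝ) + 16 * M * ε := by linarith
      _ ≤ 2 * ε ^ (1/6 : ℝ) := by linarith
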